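/- arXiv:1602.03555 — 3 statements merged into one kernel-verified Lean document; each statement's English description precedes it below -/
import Mathlib

section
/- Σ_{ab ≤ N} d(a) = (1/2) · N · (log N)² + O(N log N), where the sum is over all pairs of positive integers (a,b) with ab ≤ N and d(n) denotes the number of positive divisors of n. -/
open Finset Real

noncomputable def Hh (n : ℕ) : ℝ := ∑ i ∈ Finset.Icc 1 n, (i : ℝ)⁻¹

lemma Hh_eq (n : ℕ) : Hh n = (harmonic n : ℝ) := by
  rw [harmonic_eq_sum_Icc, Hh]; push_cast; rfl

lemma Hh_le (n : ℕ) : Hh n ≤ 1 + Real.log n := by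
  rw [Hh_eq]; exact harmonic_le_one_add_log n

lemma log_succ_le_Hh (n : ℕ) : Real.log (n + 1) ≤ Hh n := by
  rw [Hh_eq]; exact_mod_cast log_add_one_le_harmonic n

lemma le_Hh (n : ℕ) : Real.log n ≤ Hh n := by
  rcases Nat.eq_zero_or_pos n with h | h
  · simp [h, Hh]
  refine le_trans ?_ (log_succ_le_Hh n)
  apply Real.log_le_log (by exact_mod_cast h); push_cast; linarith

lemma exp_one_le_three : Real.exp 1 ≤ 3 :=
  (Real.exp_one_lt_d9.le.trans (by norm_num))

lemma anti3 (b : ℝ) : AntitoneOn (fun x : ℝ => Real.log x / x) (Set.Icc (3:ℝ) b) :=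
  Real.log_div_self_antitoneOn.mono (fun x hx => le_trans exp_one_le_three hx.1)

lemma integral_log_div_self' {a b : ℝ} (ha : 1 ≤ a) (hab : a ≤ b) :
    ∫ x in a..b, Real.log x / x = (Real.log b)^2/2 - (Real.log a)^2/2 := by
  apply intervalIntegral.integral_eq_sub_of_hasDerivAt (f := fun x => (Real.log x)^2/2)
  · intro x hx
    rw [Set.uIcc_of_le hab] at hx
    have hx0 : x ≠ 0 := by intro h; rw [h] at hx; linarith [hx.1]
    have := ((Real.hasDerivAt_log hx0).fun_pow 2).div_const 2
    refine this.congr_deriv ?_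
    norm_num
    ring
  · apply ContinuousOn.intervalIntegrable
    rw [Set.uIcc_of_le hab]
    apply ContinuousOn.div (Real.continuousOn_log.mono ?_) continuousOn_id ?_
    · intro x hx; simp only [Set.mem_compl_iff, Set.mem_singleton_iff]
      intro h; rw [h] at hx; linarith [hx.1]
    · intro x hx h; simp only [id] at h; rw [h] at hx; linarith [hx.1]

lemma log_two_le : Real.log 2 ≤ 1 := by
  rw [Real.log_le_iff_le_exp (by norm_num)]
  linarith [Real.add_one_le_exp 1]

lemma log_three_le : Real.log 3 ≤ 2 := by
  rw [Real.log_le_iff_le_exp (by norm_num)]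
  have h9 := Real.exp_one_gt_d9.le
  have : Real.exp 2 = Real.exp 1 * Real.exp 1 := by rw [← Real.exp_add]; norm_num
  nlinarith

lemma one_le_log_three : 1 ≤ Real.log 3 := by
  rw [Real.le_log_iff_exp_le (by norm_num)]; exact exp_one_le_three

lemma Lsum_bound {N : ℕ} (hN : 3 ≤ N) :
    |(∑ x ∈ Finset.Icc 1 N, Real.log x / x) - (Real.log N)^2 / 2| ≤ 3 := by
  set f : ℝ → ℝ := fun x => Real.log x / x with hf
  have hN3 : ((3:ℕ):ℝ) ≤ (N:ℝ) := by exact_mod_cast hN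
  have hint : ∫ x in ((3:ℕ):ℝ)..(N:ℝ), f x
      = (Real.log N)^2/2 - (Real.log 3)^2/2 := by
    rw [hf, integral_log_div_self' (by norm_num) hN3]; norm_num
  have hanti : AntitoneOn f (Set.Icc ((3:ℕ):ℝ) (N:ℝ)) := by
    have := anti3 (N:ℝ); simpa using this
  have hnonneg : ∀ i : ℕ, 1 ≤ i → 0 ≤ f i := by
    intro i hi
    have h1 : (1:ℝ) ≤ i := by exact_mod_cast hi
    exact div_nonneg (Real.log_nonneg h1) (by linarith)
  have hlog3 : (Real.log 3)^2 ≤ 4 := by nlinarith [one_le_log_three, log_three_le]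
  have hlog3' : 0 ≤ (Real.log 3)^2 := sq_nonneg _
  -- split the sum : Icc 1 N = Ioc 0 N = Ioc 0 3 ∪ Ioc 3 N
  have hsplit : ∑ x ∈ Finset.Icc 1 N, f x
      = (∑ x ∈ Finset.Ioc (0:ℕ) 3, f x) + ∑ x ∈ Finset.Ioc 3 N, f x := by
    rw [Finset.sum_Ioc_consecutive (fun x : ℕ => f x) (by norm_num) hN]
    congr 1
  have h2 : f ((2:ℕ):ℝ) ≤ 1 := by
    rw [hf]; simp only
    rw [div_le_one (by positivity)]
    push_cast; linarith [log_two_le]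
  have h3 : f ((3:ℕ):ℝ) ≤ 1 := by
    rw [hf]; simp only
    rw [div_le_one (by positivity)]
    push_cast; linarith [log_three_le]
  have hsmall : ∑ x ∈ Finset.Ioc (0:ℕ) 3, f x ≤ 2 := by
    have he : Finset.Ioc (0:ℕ) 3 = {1, 2, 3} := by decide
    rw [he, Finset.sum_insert (by decide), Finset.sum_insert (by decide),
      Finset.sum_singleton]
    have h1 : f ((1:ℕ):ℝ) = 0 := by rw [hf]; simp
    linarith
  have hsmall0 : 0 ≤ ∑ x ∈ Finset.Ioc (0:ℕ) 3, f x :=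
    Finset.sum_nonneg fun i hi => hnonneg i (Finset.mem_Ioc.mp hi).1
  have htail_ub : ∑ x ∈ Finset.Ioc 3 N, f x ≤ (Real.log N)^2/2 - (Real.log 3)^2/2 := by
    have h := AntitoneOn.sum_le_integral_Ico hN hanti
    rw [hint] at h
    refine le_trans (le_of_eq ?_) h
    rw [← Finset.Icc_add_one_left_eq_Ioc, ← Finset.Ico_add_one_right_eq_Icc]
    rw [Finset.sum_Ico_add' (fun i : ℕ => f i) 3 N 1]
  have e1 : ∑ x ∈ Finset.Icc 3 N, f x = f ((3:ℕ):ℝ) + ∑ x ∈ Finset.Ioc 3 N, f x := by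
    rw [← Finset.Ioc_insert_left hN, Finset.sum_insert (by simp)]
  have e2 : ∑ x ∈ Finset.Icc 3 N, f x = f (N:ℝ) + ∑ x ∈ Finset.Ico 3 N, f x := by
    rw [← Finset.Ico_insert_right hN, Finset.sum_insert (by simp)]
  have hkey : f ((3:ℕ):ℝ) + ∑ x ∈ Finset.Ioc 3 N, f x
      = f (N:ℝ) + ∑ x ∈ Finset.Ico 3 N, f x := by
    rw [← e1, ← e2]
  have hfN : 0 ≤ f (N:ℝ) := hnonneg N (by omega)
  have htail_lb : (Real.log N)^2/2 - (Real.log 3)^2/2 - 1 ≤ ∑ x ∈ Finset.Ioc 3 N, f x := by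
    have h := AntitoneOn.integral_le_sum_Ico hN hanti
    rw [hint] at h
    linarith
  rw [abs_le]
  constructor
  · rw [hsplit]; linarith
  · rw [hsplit]; linarith


lemma count_step1 (N : ℕ) :
    (∑ p ∈ (Finset.Icc 1 N ×ˢ Finset.Icc 1 N).filter (fun p => p.1 * p.2 ≤ N),
      p.1.divisors.card)
    = ∑ a ∈ Finset.Icc 1 N, a.divisors.card * (N / a) := by
  rw [Finset.sum_filter, Finset.sum_product]
  refine Finset.sum_congr rfl fun a ha => ?_
  rw [← Finset.sum_filter]
  have ha1 : 1 ≤ a := (Finset.mem_Icc.mp ha).1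
  have hfil : (Finset.Icc 1 N).filter (fun b => a * b ≤ N) = Finset.Icc 1 (N / a) := by
    ext b
    simp only [Finset.mem_filter, Finset.mem_Icc]
    constructor
    · rintro ⟨⟨h1, _⟩, h3⟩
      exact ⟨h1, (Nat.le_div_iff_mul_le ha1).mpr (by rwa [mul_comm])⟩
    · rintro ⟨h1, h2⟩
      have h3 : b * a ≤ N := (Nat.le_div_iff_mul_le ha1).mp h2
      exact ⟨⟨h1, le_trans h2 (Nat.div_le_self N a)⟩, by rwa [mul_comm]⟩
  rw [hfil]
  simp [Nat.card_Icc, mul_comm]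

lemma count_step2 (N : ℕ) :
    ∑ a ∈ Finset.Icc 1 N, a.divisors.card * (N / a)
    = ∑ x ∈ Finset.Icc 1 N, ∑ y ∈ Finset.Icc 1 (N / x), N / (x * y) := by
  have h0 : ∀ a ∈ Finset.Icc 1 N, a.divisors.card * (N / a) = ∑ _x ∈ a.divisors, N / a := by
    intro a _; rw [Finset.sum_const, smul_eq_mul]
  rw [Finset.sum_congr rfl h0, Finset.sum_sigma' (Finset.Icc 1 N) _ (fun a _ => N / a),
    Finset.sum_sigma' (Finset.Icc 1 N) _ (fun x y => N / (x * y))]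
  refine Finset.sum_nbij' (i := fun p => ⟨p.2, p.1 / p.2⟩) (j := fun p => ⟨p.1 * p.2, p.1⟩)
    ?_ ?_ ?_ ?_ ?_
  · rintro ⟨a, x⟩ hp
    rw [Finset.mem_sigma] at hp ⊢
    dsimp only at hp ⊢
    obtain ⟨ha, hx⟩ := hp
    rw [Finset.mem_Icc] at ha
    obtain ⟨hdvd, hane⟩ := Nat.mem_divisors.mp hx
    have hx0 : 0 < x := Nat.pos_of_mem_divisors hx
    have hxa : x ≤ a := Nat.le_of_dvd (by omega) hdvd
    constructor
    · rw [Finset.mem_Icc]; exact ⟨hx0, le_trans hxa ha.2⟩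
    · rw [Finset.mem_Icc]
      exact ⟨(Nat.one_le_div_iff hx0).mpr hxa,
        Nat.div_le_div_right ha.2⟩
  · rintro ⟨x, y⟩ hp
    rw [Finset.mem_sigma] at hp ⊢
    dsimp only at hp ⊢
    obtain ⟨hx, hy⟩ := hp
    rw [Finset.mem_Icc] at hx hy
    have hx0 : 0 < x := hx.1
    have hy0 : 0 < y := hy.1
    have hxy : x * y ≤ N := by
      have := (Nat.le_div_iff_mul_le hx0).mp hy.2
      rwa [mul_comm] at this
    constructor
    · rw [Finset.mem_Icc]
      exact ⟨Nat.mul_pos hx0 hy0, hxy⟩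
    · exact Nat.mem_divisors.mpr ⟨Dvd.intro y rfl, (Nat.mul_pos hx0 hy0).ne'⟩
  · rintro ⟨a, x⟩ hp
    rw [Finset.mem_sigma] at hp
    obtain ⟨_, hx⟩ := hp
    obtain ⟨hdvd, _⟩ := Nat.mem_divisors.mp hx
    dsimp only
    rw [Nat.mul_div_cancel' hdvd]
  · rintro ⟨x, y⟩ hp
    rw [Finset.mem_sigma] at hp
    obtain ⟨hx, _⟩ := hp
    have hx0 : 0 < x := (Finset.mem_Icc.mp hx).1
    dsimp only
    rw [Nat.mul_div_cancel_left y hx0]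
  · rintro ⟨a, x⟩ hp
    rw [Finset.mem_sigma] at hp
    obtain ⟨_, hx⟩ := hp
    obtain ⟨hdvd, _⟩ := Nat.mem_divisors.mp hx
    dsimp only
    rw [Nat.mul_div_cancel' hdvd]

lemma Hh_nonneg (n : ℕ) : 0 ≤ Hh n :=
  Finset.sum_nonneg fun i _ => by positivity

lemma nat_div_real_lt {N m : ℕ} (hm : 1 ≤ m) : (N : ℝ) / m < ((N / m : ℕ) : ℝ) + 1 := by
  have hm' : (0:ℝ) < m := by exact_mod_cast hm
  rw [div_lt_iff₀ hm']
  have h3 : N < (N / m + 1) * m := (Nat.div_lt_iff_lt_mul (by omega)).mp (Nat.lt_succ_self _)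
  calc (N:ℝ) < ((N / m + 1 : ℕ) : ℝ) * m := by
        rw [← Nat.cast_mul]; exact_mod_cast h3
    _ = (((N / m : ℕ) : ℝ) + 1) * m := by push_cast; ring

lemma floor_err {N m : ℕ} (hm : 1 ≤ m) : |((N / m : ℕ) : ℝ) - (N : ℝ) / m| ≤ 1 := by
  have h1 : ((N / m : ℕ) : ℝ) ≤ (N:ℝ)/m := Nat.cast_div_le
  have h2 := nat_div_real_lt (N := N) hm
  rw [abs_le]; constructor <;> linarith

lemma Hh_div_bound {N x : ℕ} (hx1 : 1 ≤ x) (hxN : x ≤ N) :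
    |Hh (N / x) - (Real.log N - Real.log x)| ≤ 1 := by
  have hM1 : 1 ≤ N / x := (Nat.one_le_div_iff (by omega)).mpr hxN
  have hx' : (0:ℝ) < x := by exact_mod_cast hx1
  have hN' : (0:ℝ) < N := by exact_mod_cast (show 0 < N by omega)
  have hdivpos : (0:ℝ) < (N:ℝ)/x := by positivity
  have hlid : Real.log N - Real.log x = Real.log ((N:ℝ)/x) :=
    (Real.log_div (by positivity) (by positivity)).symm
  have hMpos : (0:ℝ) < ((N / x : ℕ) : ℝ) := by exact_mod_cast hM1
  have hub : Hh (N / x) ≤ 1 + Real.log ((N:ℝ)/x) := by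
    refine le_trans (Hh_le _) ?_
    have := Real.log_le_log hMpos (Nat.cast_div_le (m := N) (n := x))
    linarith
  have hlb : Real.log ((N:ℝ)/x) ≤ Hh (N / x) := by
    refine le_trans ?_ (log_succ_le_Hh (N / x))
    have h2 := nat_div_real_lt (N := N) hx1
    have := Real.log_le_log hdivpos h2.le
    push_cast at this ⊢
    linarith
  rw [hlid, abs_le]; constructor <;> linarith

theorem sum_divisors_over_pairs_asymptotic :
    ∃ C : ℝ, C > 0 ∧ ∀ᶠ N : ℕ in Filter.atTop,
      |(∑ p ∈ (Finset.Icc 1 N ×ˢ Finset.Icc 1 N).filter (fun p => p.1 * p.2 ≤ N),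
          (p.1.divisors.card : ℝ))
        - (1 / 2) * N * (Real.log N) ^ 2|
        ≤ C * N * Real.log N := by
  refine ⟨10, by norm_num, ?_⟩
  filter_upwards [Filter.eventually_ge_atTop 3] with N hN
  have hN0 : (0:ℝ) < N := by exact_mod_cast (show 0 < N by omega)
  have hlogN : 1 ≤ Real.log N := le_trans one_le_log_three
    (Real.log_le_log (by norm_num) (by exact_mod_cast hN))
  have hlogN0 : 0 ≤ Real.log N := by linarith
  have hS : (∑ p ∈ (Finset.Icc 1 N ×ˢ Finset.Icc 1 N).filter (fun p => p.1 * p.2 ≤ N),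
      (p.1.divisors.card : ℝ))
      = ∑ x ∈ Finset.Icc 1 N, ∑ y ∈ Finset.Icc 1 (N / x), ((N / (x * y) : ℕ) : ℝ) := by
    rw [← Nat.cast_sum, count_step1, count_step2, Nat.cast_sum]
    exact Finset.sum_congr rfl fun x _ => by rw [Nat.cast_sum]
  set T1 : ℝ := ∑ x ∈ Finset.Icc 1 N, ∑ y ∈ Finset.Icc 1 (N / x), ((N / (x * y) : ℕ) : ℝ)
    with hT1def
  set T2 : ℝ := ∑ x ∈ Finset.Icc 1 N, ∑ y ∈ Finset.Icc 1 (N / x), (N:ℝ)/((x:ℝ)*(y:ℝ))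
    with hT2def
  set B : ℝ := ∑ x ∈ Finset.Icc 1 N, (x:ℝ)⁻¹ * Hh (N / x) with hBdef
  have hfloor : |T1 - T2| ≤ (N:ℝ) * (1 + Real.log N) := by
    rw [hT1def, hT2def, ← Finset.sum_sub_distrib]
    refine le_trans (Finset.abs_sum_le_sum_abs _ _) ?_
    have hx1 : ∀ x ∈ Finset.Icc 1 N,
        |(∑ y ∈ Finset.Icc 1 (N/x), ((N/(x*y) : ℕ):ℝ))
          - ∑ y ∈ Finset.Icc 1 (N/x), (N:ℝ)/((x:ℝ)*(y:ℝ))|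
          ≤ ((N/x : ℕ):ℝ) := by
      intro x hx
      rw [← Finset.sum_sub_distrib]
      refine le_trans (Finset.abs_sum_le_sum_abs _ _) ?_
      have hterm : ∀ y ∈ Finset.Icc 1 (N/x),
          |((N/(x*y) : ℕ):ℝ) - (N:ℝ)/((x:ℝ)*(y:ℝ))| ≤ 1 := by
        intro y hy
        have hx0 : 1 ≤ x := (Finset.mem_Icc.mp hx).1
        have hy0 : 1 ≤ y := (Finset.mem_Icc.mp hy).1
        have h := floor_err (N := N) (m := x*y) (Nat.one_le_iff_ne_zero.mpr
          (Nat.mul_ne_zero (by omega) (by omega)))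
        rwa [Nat.cast_mul] at h
      refine le_trans (Finset.sum_le_sum hterm) ?_
      rw [Finset.sum_const, Nat.card_Icc]
      simp
    refine le_trans (Finset.sum_le_sum hx1) ?_
    have hstep : ∀ x ∈ Finset.Icc 1 N, ((N/x : ℕ):ℝ) ≤ (N:ℝ) * ((x:ℝ))⁻¹ := by
      intro x _
      rw [← div_eq_mul_inv]
      exact Nat.cast_div_le
    refine le_trans (Finset.sum_le_sum hstep) ?_
    rw [← Finset.mul_sum]
    have hH : (∑ x ∈ Finset.Icc 1 N, ((x:ℝ))⁻¹) = Hh N := rfl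
    rw [hH]
    exact mul_le_mul_of_nonneg_left (Hh_le N) hN0.le
  have hT2B : T2 = (N:ℝ) * B := by
    rw [hT2def, hBdef, Finset.mul_sum]
    refine Finset.sum_congr rfl fun x _ => ?_
    rw [Hh, Finset.mul_sum, Finset.mul_sum]
    exact Finset.sum_congr rfl fun y _ => by ring
  have hB1 : |B - ∑ x ∈ Finset.Icc 1 N, (x:ℝ)⁻¹ * (Real.log N - Real.log x)| ≤ Hh N := by
    rw [hBdef, ← Finset.sum_sub_distrib]
    refine le_trans (Finset.abs_sum_le_sum_abs _ _) ?_
    have hBx : ∀ x ∈ Finset.Icc 1 N,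
        |(x:ℝ)⁻¹ * Hh (N/x) - (x:ℝ)⁻¹ * (Real.log N - Real.log x)| ≤ ((x:ℝ))⁻¹ := by
      intro x hx
      obtain ⟨h1, h2⟩ := Finset.mem_Icc.mp hx
      have hxpos : (0:ℝ) < x := by exact_mod_cast h1
      rw [← mul_sub, abs_mul, abs_of_nonneg (by positivity : (0:ℝ) ≤ ((x:ℝ))⁻¹)]
      calc ((x:ℝ))⁻¹ * |Hh (N/x) - (Real.log N - Real.log x)|
          ≤ ((x:ℝ))⁻¹ * 1 := by
            exact mul_le_mul_of_nonneg_left (Hh_div_bound h1 h2) (by positivity)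
        _ = ((x:ℝ))⁻¹ := mul_one _
    exact le_of_le_of_eq (Finset.sum_le_sum hBx) rfl
  have hB2 : ∑ x ∈ Finset.Icc 1 N, (x:ℝ)⁻¹ * (Real.log N - Real.log x)
      = Real.log N * Hh N - ∑ x ∈ Finset.Icc 1 N, Real.log x / x := by
    rw [Hh, Finset.mul_sum, ← Finset.sum_sub_distrib]
    exact Finset.sum_congr rfl fun x _ => by ring
  have hB3 : |Real.log N * Hh N - (Real.log N)^2| ≤ Real.log N := by
    have h1 := le_Hh N
    have h2 := Hh_le N
    rw [show Real.log N * Hh N - (Real.log N)^2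
        = Real.log N * (Hh N - Real.log N) by ring,
      abs_mul, abs_of_nonneg hlogN0]
    have h3 : |Hh N - Real.log N| ≤ 1 := by rw [abs_le]; constructor <;> linarith
    calc Real.log N * |Hh N - Real.log N| ≤ Real.log N * 1 :=
        mul_le_mul_of_nonneg_left h3 hlogN0
      _ = Real.log N := mul_one _
  have hL := Lsum_bound hN
  have hBfinal : |B - (Real.log N)^2/2| ≤ 6 * Real.log N := by
    have e1 := hB1
    rw [hB2] at e1
    rw [abs_le] at e1 hB3 hL ⊢
    have hHn := Hh_le N
    constructor <;> [linarith; linarith]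
  rw [hS]
  have habs : |T1 - (1/2) * (N:ℝ) * (Real.log N)^2|
      ≤ |T1 - T2| + |T2 - (1/2) * (N:ℝ) * (Real.log N)^2| := by
    have := abs_sub_le T1 T2 ((1/2) * (N:ℝ) * (Real.log N)^2)
    linarith
  have h4 : |T2 - (1/2) * (N:ℝ) * (Real.log N)^2| = (N:ℝ) * |B - (Real.log N)^2/2| := by
    rw [hT2B, show (N:ℝ) * B - (1/2) * (N:ℝ) * (Real.log N)^2
        = (N:ℝ) * (B - (Real.log N)^2/2) by ring, abs_mul, abs_of_nonneg hN0.le]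
  refine le_trans habs ?_
  rw [h4]
  have h5 : (N:ℝ) * |B - (Real.log N)^2/2| ≤ (N:ℝ) * (6 * Real.log N) :=
    mul_le_mul_of_nonneg_left hBfinal hN0.le
  nlinarith [hfloor, h5, hN0.le, hlogN]
end

section
/- Let A(N) be the number of triples (a,b,r) of positive integers with r ∣ ab, ab ≤ N, and r dividing at least one of a and b. Then A(N) = N (log N)² + O(N log N); that is, there is a constant C > 0 such that |A(N) − N (log N)²| ≤ C · N log N for all sufficiently large N. -/
/-- `A N` counts triples `(a, b, r)` of positive integers with `a * b ≤ N`, `r ∣ a * b`,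
and `r` dividing at least one of `a` and `b`. -/
def tripleCountA (N : ℕ) : ℕ :=
  ((Finset.Icc 1 N ×ˢ Finset.Icc 1 N ×ˢ Finset.Icc 1 N).filter
    (fun t => t.1 * t.2.1 ≤ N ∧ t.2.2 ∣ t.1 * t.2.1 ∧ (t.2.2 ∣ t.1 ∨ t.2.2 ∣ t.2.1))).card

open Finset Real

noncomputable def Hs (M : ℕ) : ℝ := ∑ s ∈ Icc 1 M, (1 : ℝ) / s
noncomputable def Ss (M : ℕ) : ℝ := ∑ s ∈ Icc 1 M, Real.log s / s

lemma log_add_one_sub_le {x : ℝ} (hx : 0 < x) :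
    Real.log (x + 1) - Real.log x ≤ 1 / x := by
  have h1 : Real.log ((x + 1) / x) ≤ (x + 1) / x - 1 :=
    Real.log_le_sub_one_of_pos (by positivity)
  rw [Real.log_div (by positivity) (by positivity)] at h1
  have : (x + 1) / x - 1 = 1 / x := by field_simp; ring
  linarith [this ▸ h1]

lemma le_log_add_one_sub {x : ℝ} (hx : 0 < x) :
    1 / (x + 1) ≤ Real.log (x + 1) - Real.log x := by
  have h1 : Real.log (x / (x + 1)) ≤ x / (x + 1) - 1 :=
    Real.log_le_sub_one_of_pos (by positivity)
  rw [Real.log_div (by positivity) (by positivity)] at h1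
  have : x / (x + 1) - 1 = -(1 / (x + 1)) := by field_simp; ring
  linarith [this ▸ h1]

lemma log_le_Hs (M : ℕ) : Real.log (M + 1) ≤ Hs M := by
  induction M with
  | zero => simp [Hs]
  | succ n ih =>
      rw [Hs, sum_Icc_succ_top (by omega)]
      have hn : (0:ℝ) < (n:ℝ) + 1 := by positivity
      have := log_add_one_sub_le hn
      rw [Hs] at ih
      push_cast
      linarith

lemma Hs_le (M : ℕ) (hM : 1 ≤ M) : Hs M ≤ 1 + Real.log M := by
  induction M with
  | zero => omega
  | succ n ih =>
      rcases Nat.eq_zero_or_pos n with h | hn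
      · subst h; simp [Hs]
      · rw [Hs, sum_Icc_succ_top (by omega)]
        have hn' : (0:ℝ) < (n:ℝ) := by exact_mod_cast hn
        have h2 := le_log_add_one_sub hn'
        have := ih hn
        rw [Hs] at this
        push_cast
        linarith

lemma Hs_ge_log (M : ℕ) : Real.log M ≤ Hs M := by
  refine le_trans ?_ (log_le_Hs M)
  rcases Nat.eq_zero_or_pos M with h | h
  · subst h; simp
  · exact Real.log_le_log (by exact_mod_cast h) (by linarith)

lemma sum_inv_sq_le (M : ℕ) : ∑ s ∈ Icc 1 M, (1:ℝ) / (s:ℝ)^2 ≤ 2 - 2 / (M + 1) := by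
  induction M with
  | zero => simp
  | succ n ih =>
      rw [sum_Icc_succ_top (by omega)]
      have hn : (0:ℝ) < n + 1 := by positivity
      have hn2 : (0:ℝ) < n + 2 := by positivity
      have key : (1:ℝ) / ((n:ℝ)+1)^2 ≤ 2 / (n+1) - 2 / (n+2) := by
        rw [div_sub_div _ _ (ne_of_gt hn) (ne_of_gt hn2),
          div_le_div_iff₀ (by positivity) (by positivity)]
        nlinarith [sq_nonneg ((n:ℝ))]
      have e : ((n:ℝ)+1+1) = (n:ℝ)+2 := by ring
      push_cast
      rw [e]
      push_cast at ih
      linarith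

lemma sum_inv_sq_le' (M : ℕ) : ∑ s ∈ Icc 1 M, (1:ℝ) / (s:ℝ)^2 ≤ 2 := by
  have h : (0:ℝ) < 2 / (M+1) := by positivity
  linarith [sum_inv_sq_le M]

lemma term_ub {x : ℝ} (hx : 1 ≤ x) :
    (Real.log (x+1))^2/2 - (Real.log x)^2/2 ≤ Real.log x / x + 1 / (2 * x^2) := by
  have hx0 : (0:ℝ) < x := by linarith
  have h1 := log_add_one_sub_le hx0
  have h2 : Real.log x ≤ Real.log (x+1) := Real.log_le_log hx0 (by linarith)
  have h3 : 0 ≤ Real.log x := Real.log_nonneg hx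
  set a := Real.log x
  set b := Real.log (x+1)
  have key : b^2 ≤ (a + 1/x)^2 := by nlinarith
  have e : (a + 1/x)^2 = a^2 + 2*(a/x) + 1/x^2 := by field_simp; ring
  have e2 : 1/(2*x^2) = (1/2) * (1/x^2) := by ring
  rw [e2]
  nlinarith

lemma term_lb {x : ℝ} (hx : 1 ≤ x) :
    Real.log x / x - Real.log x / x^2 ≤ (Real.log (x+1))^2/2 - (Real.log x)^2/2 := by
  have hx0 : (0:ℝ) < x := by linarith
  have h1 := le_log_add_one_sub hx0
  have h2 : Real.log x ≤ Real.log (x+1) := Real.log_le_log hx0 (by linarith)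
  have h3 : 0 ≤ Real.log x := Real.log_nonneg hx
  set a := Real.log x
  set b := Real.log (x+1)
  have key : 2 * a / (x+1) ≤ (b - a) * (b + a) := by
    have hh := mul_le_mul h1 (by linarith : 2*a ≤ b + a) (by linarith) (by linarith)
    calc 2*a/(x+1) = 1/(x+1) * (2*a) := by ring
    _ ≤ (b-a)*(b+a) := hh
  have key2 : a / x - a / x^2 ≤ a / (x+1) := by
    rw [div_sub_div _ _ (ne_of_gt hx0) (by positivity), div_le_div_iff₀ (by positivity) (by positivity)]
    nlinarith
  have e : (b-a)*(b+a) = b^2 - a^2 := by ring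
  have e3 : 2*a/(x+1) = 2*(a/(x+1)) := by ring
  nlinarith

lemma Icc_one_sum (f : ℕ → ℝ) (M : ℕ) : ∑ s ∈ Icc 1 M, f s = ∑ i ∈ range M, f (i+1) := by
  induction M with
  | zero => simp
  | succ n ih => rw [sum_Icc_succ_top (by omega), sum_range_succ, ih]

lemma Ss_bounds (M : ℕ) (hM : 1 ≤ M) :
    (Real.log M)^2/2 - 1 ≤ Ss M ∧ Ss M ≤ (Real.log M)^2/2 + 3*Real.log M + 1 := by
  have hM' : (1:ℝ) ≤ M := by exact_mod_cast hM
  have hlogM : 0 ≤ Real.log M := Real.log_nonneg hM'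
  set g : ℕ → ℝ := fun n => (Real.log n)^2/2 with hg
  have tele : ∑ i ∈ range M, (g (i+1+1) - g (i+1)) = g (M+1) - g 1 :=
    Finset.sum_range_sub (fun i => g (i+1)) M
  have hg1 : g 1 = 0 := by simp [hg]
  have hSeq : Ss M = ∑ i ∈ range M, Real.log ((i:ℝ)+1) / ((i:ℝ)+1) := by
    rw [Ss, Icc_one_sum (fun s => Real.log s / s) M]; push_cast; rfl
  have hsq : ∑ i ∈ range M, (1:ℝ)/((i:ℝ)+1)^2 ≤ 2 := by
    have h := sum_inv_sq_le' M
    rw [Icc_one_sum (fun s => (1:ℝ)/(s:ℝ)^2) M] at h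
    push_cast at h
    exact h
  have gdiff : ∀ i : ℕ, g (i+1+1) - g (i+1) =
      (Real.log (((i:ℝ)+1)+1))^2/2 - (Real.log ((i:ℝ)+1))^2/2 := by
    intro i; simp only [hg]; push_cast; ring_nf
  have hub : Ss M ≤ g (M+1) + 2 * Real.log M := by
    rw [hSeq]
    have step : ∀ i ∈ range M, Real.log ((i:ℝ)+1)/((i:ℝ)+1) ≤
        (g (i+1+1) - g (i+1)) + Real.log M * (1/((i:ℝ)+1)^2) := by
      intro i hi
      have h1 := term_lb (x := (i:ℝ)+1) (by push_cast; linarith)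
      rw [← gdiff i] at h1
      have hle : Real.log ((i:ℝ)+1) ≤ Real.log M := by
        apply Real.log_le_log (by positivity)
        have : i + 1 ≤ M := mem_range.mp hi
        exact_mod_cast this
      have hpos : (0:ℝ) < ((i:ℝ)+1)^2 := by positivity
      have h2 : Real.log ((i:ℝ)+1) / ((i:ℝ)+1)^2 ≤ Real.log M * (1/((i:ℝ)+1)^2) := by
        rw [mul_one_div]
        gcongr
      linarith
    calc ∑ i ∈ range M, Real.log ((i:ℝ)+1)/((i:ℝ)+1)
        ≤ ∑ i ∈ range M, ((g (i+1+1) - g (i+1)) + Real.log M * (1/((i:ℝ)+1)^2)) :=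
          Finset.sum_le_sum step
      _ = (g (M+1) - g 1) + Real.log M * ∑ i ∈ range M, (1:ℝ)/((i:ℝ)+1)^2 := by
          rw [Finset.sum_add_distrib, tele, ← Finset.mul_sum]
      _ ≤ g (M+1) + 2 * Real.log M := by rw [hg1]; nlinarith
  have hlb : g (M+1) - 1 ≤ Ss M := by
    rw [hSeq]
    have step : ∀ i ∈ range M, (g (i+1+1) - g (i+1)) - (1/2) * (1/((i:ℝ)+1)^2) ≤
        Real.log ((i:ℝ)+1)/((i:ℝ)+1) := by
      intro i hi
      have h1 := term_ub (x := (i:ℝ)+1) (by push_cast; linarith)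
      rw [← gdiff i] at h1
      have e2 : 1 / (2 * ((i:ℝ)+1)^2) = (1/2) * (1/((i:ℝ)+1)^2) := by
        field_simp
      rw [e2] at h1
      linarith
    calc g (M+1) - 1 ≤ (g (M+1) - g 1) - (1/2) * ∑ i ∈ range M, (1:ℝ)/((i:ℝ)+1)^2 := by
          rw [hg1]; nlinarith
      _ = ∑ i ∈ range M, ((g (i+1+1) - g (i+1)) - (1/2) * (1/((i:ℝ)+1)^2)) := by
          rw [Finset.sum_sub_distrib, tele, ← Finset.mul_sum]
      _ ≤ ∑ i ∈ range M, Real.log ((i:ℝ)+1)/((i:ℝ)+1) := Finset.sum_le_sum step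
  have hcast : Real.log ((M:ℕ)+1 : ℕ) = Real.log ((M:ℝ)+1) := by push_cast; rfl
  have hgM : g M ≤ g (M+1) := by
    simp only [hg, hcast]
    have h2 : Real.log M ≤ Real.log ((M:ℝ)+1) := Real.log_le_log (by linarith) (by linarith)
    nlinarith
  have hgM2 : g (M+1) ≤ g M + Real.log M + 1/2 := by
    have h1 := term_ub (x := (M:ℝ)) hM'
    simp only [hg, hcast]
    have h2 : Real.log M / M ≤ Real.log M := by
      rw [div_le_iff₀ (by linarith)]; nlinarith
    have h3 : 1 / (2*(M:ℝ)^2) ≤ 1/2 := by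
      rw [div_le_div_iff₀ (by positivity) (by norm_num)]; nlinarith
    linarith
  have hgMeq : g M = (Real.log M)^2/2 := rfl
  constructor
  · linarith [hgMeq ▸ hgM]
  · nlinarith [hub, hgM2]

lemma natdiv_lb {M s : ℕ} (hs : 1 ≤ s) : (M:ℝ)/s - 1 ≤ ((M / s : ℕ):ℝ) := by
  have hs' : (0:ℝ) < s := by exact_mod_cast hs
  have h1 : M < s * (M / s) + s := by
    have := Nat.div_add_mod M s
    have := Nat.mod_lt M (show 0 < s by omega)
    omega
  have h1' : (M:ℝ) < s * ((M/s : ℕ):ℝ) + s := by exact_mod_cast h1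
  rw [div_sub_one (ne_of_gt hs'), div_le_iff₀ hs']
  nlinarith

lemma inner_sum_eq (N M : ℕ) (hMN : M ≤ N) :
    ∑ s ∈ Icc 1 N, ((M / s : ℕ) : ℝ) = ∑ s ∈ Icc 1 M, ((M / s : ℕ) : ℝ) := by
  symm
  apply Finset.sum_subset (Icc_subset_Icc_right hMN)
  intro s hs1 hs2
  simp only [mem_Icc] at hs1 hs2
  have : M < s := by omega
  rw [Nat.div_eq_of_lt this]
  simp

lemma inner_ub (N M : ℕ) (hMN : M ≤ N) :
    ∑ s ∈ Icc 1 N, ((M / s : ℕ) : ℝ) ≤ (M:ℝ) * Hs M := by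
  rw [inner_sum_eq N M hMN, Hs, Finset.mul_sum]
  apply Finset.sum_le_sum
  intro s hs
  have := Nat.cast_div_le (α := ℝ) (m := M) (n := s)
  rw [mul_one_div]
  exact this

lemma inner_lb (N M : ℕ) (hMN : M ≤ N) :
    (M:ℝ) * Hs M - M ≤ ∑ s ∈ Icc 1 N, ((M / s : ℕ) : ℝ) := by
  rw [inner_sum_eq N M hMN, Hs, Finset.mul_sum]
  have e : (M:ℝ) * Hs M - M = ∑ s ∈ Icc 1 M, ((M:ℝ) * (1/s) - 1) := by
    rw [Finset.sum_sub_distrib, ← Finset.mul_sum, Finset.sum_const, Nat.card_Icc, Hs]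
    simp
  rw [← Finset.mul_sum, ← Hs, e]
  apply Finset.sum_le_sum
  intro s hs
  simp only [mem_Icc] at hs
  have := natdiv_lb (M := M) (s := s) hs.1
  rw [mul_one_div]
  linarith

lemma inner_nonneg (N M : ℕ) : 0 ≤ ∑ s ∈ Icc 1 N, ((M / s : ℕ) : ℝ) :=
  Finset.sum_nonneg (fun s _ => by positivity)

def T3n (N : ℕ) : ℕ := ∑ r ∈ Icc 1 N, ∑ s ∈ Icc 1 N, N / (r * s)
def Gcn (N : ℕ) : ℕ := ∑ r ∈ Icc 1 N, ∑ s ∈ Icc 1 N, N / (r * r * s)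

lemma row_ub (N r : ℕ) (hr1 : 1 ≤ r) (hrN : r ≤ N) :
    ∑ s ∈ Icc 1 N, ((N / (r * s) : ℕ) : ℝ) ≤
      ((N:ℝ)/r) * (1 + (Real.log N - Real.log r)) := by
  have hN1 : 1 ≤ N := le_trans hr1 hrN
  set M := N / r with hM
  have hM1 : 1 ≤ M := (Nat.one_le_div_iff (by omega)).2 hrN
  have hMN : M ≤ N := Nat.div_le_self N r
  have hdd : ∀ s : ℕ, N / (r * s) = M / s := fun s => (Nat.div_div_eq_div_mul N r s).symm
  have h1 : ∑ s ∈ Icc 1 N, ((N / (r * s) : ℕ) : ℝ) = ∑ s ∈ Icc 1 N, ((M / s : ℕ) : ℝ) := by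
    apply Finset.sum_congr rfl; intro s _; rw [hdd]
  rw [h1]
  have h2 := inner_ub N M hMN
  have hr' : (0:ℝ) < r := by exact_mod_cast hr1
  have hM' : (1:ℝ) ≤ M := by exact_mod_cast hM1
  have hx : (M:ℝ) ≤ (N:ℝ)/r := Nat.cast_div_le
  have hx1 : (1:ℝ) ≤ (N:ℝ)/r := le_trans hM' hx
  have hlogx : Real.log M ≤ Real.log ((N:ℝ)/r) := Real.log_le_log (by linarith) hx
  have hHs : Hs M ≤ 1 + Real.log M := Hs_le M hM1
  have hlogdiv : Real.log ((N:ℝ)/r) = Real.log N - Real.log r :=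
    Real.log_div (by positivity) (by positivity)
  calc ∑ s ∈ Icc 1 N, ((M / s : ℕ) : ℝ) ≤ (M:ℝ) * Hs M := h2
    _ ≤ ((N:ℝ)/r) * (1 + (Real.log N - Real.log r)) := by
        rw [← hlogdiv]
        have hHs2 : Hs M ≤ 1 + Real.log ((N:ℝ)/r) := by linarith
        have hHsnn : 0 ≤ Hs M := le_trans (by positivity) (Hs_ge_log M)
        nlinarith

lemma row_lb (N r : ℕ) (hr1 : 1 ≤ r) (hrN : r ≤ N) :
    ((N:ℝ)/r) * ((Real.log N - Real.log r) - 2) - Real.log N ≤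
      ∑ s ∈ Icc 1 N, ((N / (r * s) : ℕ) : ℝ) := by
  have hN1 : 1 ≤ N := le_trans hr1 hrN
  set M := N / r with hM
  have hM1 : 1 ≤ M := (Nat.one_le_div_iff (by omega)).2 hrN
  have hMN : M ≤ N := Nat.div_le_self N r
  have h1 : ∑ s ∈ Icc 1 N, ((N / (r * s) : ℕ) : ℝ) = ∑ s ∈ Icc 1 N, ((M / s : ℕ) : ℝ) := by
    apply Finset.sum_congr rfl; intro s _; rw [(Nat.div_div_eq_div_mul N r s).symm]
  rw [h1]
  have hr' : (0:ℝ) < r := by exact_mod_cast hr1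
  have hN' : (1:ℝ) ≤ N := by exact_mod_cast hN1
  have hM' : (1:ℝ) ≤ M := by exact_mod_cast hM1
  set x := (N:ℝ)/r with hxdef
  have hlogdiv : Real.log x = Real.log N - Real.log r :=
    Real.log_div (by positivity) (by positivity)
  rw [← hlogdiv]
  have hLnn : 0 ≤ Real.log N := Real.log_nonneg hN'
  have hxM : (M:ℝ) ≤ x := Nat.cast_div_le
  have hx1 : (1:ℝ) ≤ x := le_trans hM' hxM
  have hMx : x - 1 ≤ (M:ℝ) := by
    have := natdiv_lb (M := N) (s := r) hr1
    rw [← hM] at this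
    linarith [this]
  have hlogxN : Real.log x ≤ Real.log N := by
    apply Real.log_le_log (by linarith)
    rw [hxdef, div_le_iff₀ hr']
    have h1r : (1:ℝ) ≤ r := by exact_mod_cast hr1
    nlinarith [mul_le_mul_of_nonneg_left h1r (show (0:ℝ) ≤ N by positivity)]
  rcases le_or_gt (Real.log x) 2 with hc | hc
  · have : x * (Real.log x - 2) ≤ 0 := mul_nonpos_of_nonneg_of_nonpos (by linarith) (by linarith)
    linarith [inner_nonneg N M]
  · have h2 := inner_lb N M hMN
    have hHs : Real.log M ≤ Hs M := Hs_ge_log M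
    have hlog2 : Real.log 2 ≤ 1 := by
      have := Real.log_le_sub_one_of_pos (by norm_num : (0:ℝ) < 2)
      linarith
    have hlogMx : Real.log x - Real.log 2 ≤ Real.log M := by
      have hx2M : x ≤ 2 * M := by linarith
      have : Real.log x ≤ Real.log (2 * M) := Real.log_le_log (by linarith) hx2M
      rw [Real.log_mul (by norm_num) (by positivity)] at this
      linarith
    have key : x * (Real.log x - 2) - Real.log N ≤ (M:ℝ) * Hs M - M := by
      have s1 : (M:ℝ) * (Real.log x - 2) ≤ (M:ℝ) * (Real.log M - 1) := by
        apply mul_le_mul_of_nonneg_left _ (by linarith)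
        linarith
      have s2 : (M:ℝ) * (Real.log M - 1) ≤ (M:ℝ) * Hs M - M := by nlinarith
      have s3 : x * (Real.log x - 2) - (Real.log x - 2) ≤ (M:ℝ) * (Real.log x - 2) := by
        nlinarith
      nlinarith
    linarith

lemma T3_bounds (N : ℕ) (hN : 1 ≤ N) :
    |(T3n N : ℝ) - N * (Real.log N)^2/2| ≤ N * (7*Real.log N + 3) := by
  set L := Real.log N with hL
  have hN' : (1:ℝ) ≤ N := by exact_mod_cast hN
  have hLnn : 0 ≤ L := Real.log_nonneg hN'
  have hcast : (T3n N : ℝ) = ∑ r ∈ Icc 1 N, ∑ s ∈ Icc 1 N, ((N / (r * s) : ℕ) : ℝ) := by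
    rw [T3n]; push_cast; rfl
  have hHs1 : L ≤ Hs N := Hs_ge_log N
  have hHs2 : Hs N ≤ 1 + L := Hs_le N hN
  obtain ⟨hSs1, hSs2⟩ := Ss_bounds N hN
  -- upper bound
  have hub : (T3n N : ℝ) ≤ (N:ℝ) * (1+L) * Hs N - N * Ss N := by
    rw [hcast]
    calc ∑ r ∈ Icc 1 N, ∑ s ∈ Icc 1 N, ((N / (r * s) : ℕ) : ℝ)
        ≤ ∑ r ∈ Icc 1 N, ((N:ℝ)/r) * (1 + (L - Real.log r)) := by
          apply Finset.sum_le_sum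
          intro r hr
          simp only [mem_Icc] at hr
          exact row_ub N r hr.1 hr.2
      _ = ∑ r ∈ Icc 1 N, ((N:ℝ)*(1+L)*(1/r) - (N:ℝ)*(Real.log r/r)) := by
          apply Finset.sum_congr rfl; intro r _; ring
      _ = (N:ℝ) * (1+L) * Hs N - N * Ss N := by
          rw [Finset.sum_sub_distrib, ← Finset.mul_sum, ← Finset.mul_sum, Hs, Ss]
  -- lower bound
  have hlb : (N:ℝ) * (L-2) * Hs N - N * Ss N - N * L ≤ (T3n N : ℝ) := by
    rw [hcast]
    calc (N:ℝ) * (L-2) * Hs N - N * Ss N - N * L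
        = ∑ r ∈ Icc 1 N, ((N:ℝ)*(L-2)*(1/r) - (N:ℝ)*(Real.log r/r) - L) := by
          rw [Finset.sum_sub_distrib, Finset.sum_sub_distrib, ← Finset.mul_sum,
            ← Finset.mul_sum, Hs, Ss, Finset.sum_const, Nat.card_Icc]
          push_cast
          ring
      _ = ∑ r ∈ Icc 1 N, (((N:ℝ)/r) * ((L - Real.log r) - 2) - L) := by
          apply Finset.sum_congr rfl; intro r _; ring
      _ ≤ ∑ r ∈ Icc 1 N, ∑ s ∈ Icc 1 N, ((N / (r * s) : ℕ) : ℝ) := by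
          apply Finset.sum_le_sum
          intro r hr
          simp only [mem_Icc] at hr
          exact row_lb N r hr.1 hr.2
  rw [abs_le]
  constructor
  · have h1 : (N:ℝ)*(L-2)*Hs N ≥ (N:ℝ)*((L-2)*L - 2) := by
      rcases le_or_gt 2 L with h | h
      · have : (L-2)*Hs N ≥ (L-2)*L := mul_le_mul_of_nonneg_left hHs1 (by linarith)
        nlinarith
      · have : (L-2)*Hs N ≥ (L-2)*(1+L) := by nlinarith
        nlinarith
    have h2 : (N:ℝ) * Ss N ≤ N * (L^2/2 + 3*L + 1) := by nlinarith
    nlinarith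
  · have h1 : (N:ℝ)*(1+L)*Hs N ≤ (N:ℝ)*((1+L)*(1+L)) := by
      have h := mul_le_mul_of_nonneg_left hHs2 (show (0:ℝ) ≤ (N:ℝ)*(1+L) by positivity)
      linarith [h]
    have h2 : (N:ℝ) * Ss N ≥ N * (L^2/2 - 1) := by nlinarith
    nlinarith

lemma Gc_bound (N : ℕ) (hN : 1 ≤ N) :
    (Gcn N : ℝ) ≤ 2 * N * (Real.log N + 1) := by
  set L := Real.log N with hL
  have hN' : (1:ℝ) ≤ N := by exact_mod_cast hN
  have hLnn : 0 ≤ L := Real.log_nonneg hN'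
  have hcast : (Gcn N : ℝ) = ∑ r ∈ Icc 1 N, ∑ s ∈ Icc 1 N, ((N / (r * r * s) : ℕ) : ℝ) := by
    rw [Gcn]; push_cast; rfl
  rw [hcast]
  calc ∑ r ∈ Icc 1 N, ∑ s ∈ Icc 1 N, ((N / (r * r * s) : ℕ) : ℝ)
      ≤ ∑ r ∈ Icc 1 N, (N:ℝ) * (L + 1) * (1/(r:ℝ)^2) := by
        apply Finset.sum_le_sum
        intro r hr
        simp only [mem_Icc] at hr
        have hr' : (0:ℝ) < r := by exact_mod_cast hr.1
        set M := N / (r * r) with hM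
        have hMN : M ≤ N := Nat.div_le_self N _
        have h1 : ∑ s ∈ Icc 1 N, ((N / (r * r * s) : ℕ) : ℝ) = ∑ s ∈ Icc 1 N, ((M / s : ℕ) : ℝ) := by
          apply Finset.sum_congr rfl; intro s _
          rw [(Nat.div_div_eq_div_mul N (r*r) s).symm]
        rw [h1]
        have h2 := inner_ub N M hMN
        have h3 : (M:ℝ) * Hs M ≤ (N:ℝ) * (L + 1) * (1/(r:ℝ)^2) := by
          rcases Nat.eq_zero_or_pos M with h0 | hM1
          · rw [h0]; simp; positivity
          · have hM' : (1:ℝ) ≤ M := by exact_mod_cast hM1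
            have hHs : Hs M ≤ 1 + Real.log M := Hs_le M hM1
            have hlogM : Real.log M ≤ L := by
              apply Real.log_le_log (by linarith)
              exact_mod_cast hMN
            have hxM : (M:ℝ) ≤ (N:ℝ)/((r:ℝ)*r) := by
              have := Nat.cast_div_le (α := ℝ) (m := N) (n := r*r)
              push_cast at this
              exact this
            have e : (N:ℝ) * (L + 1) * (1/(r:ℝ)^2) = ((N:ℝ)/((r:ℝ)*r)) * (L+1) := by
              field_simp
            rw [e]
            have hHsnn : 0 ≤ Hs M := le_trans (Real.log_nonneg hM') (Hs_ge_log M)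
            nlinarith
        linarith
    _ = (N:ℝ) * (L + 1) * ∑ r ∈ Icc 1 N, (1/(r:ℝ)^2) := by rw [← Finset.mul_sum]
    _ ≤ 2 * N * (L + 1) := by
        have h0 := sum_inv_sq_le' N
        have h := mul_le_mul_of_nonneg_left h0 (show (0:ℝ) ≤ (N:ℝ)*(L+1) by positivity)
        linarith [h]

lemma count_T3 (N : ℕ) :
    ((Icc 1 N ×ˢ Icc 1 N ×ˢ Icc 1 N).filter
      (fun t : ℕ × ℕ × ℕ => t.1 * t.2.1 * t.2.2 ≤ N)).card = T3n N := by
  rw [Finset.card_filter, Finset.sum_product, T3n]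
  apply Finset.sum_congr rfl
  intro r hr
  rw [Finset.sum_product]
  apply Finset.sum_congr rfl
  intro s hs
  simp only [mem_Icc] at hr hs
  have hpos : 0 < r * s := Nat.mul_pos (by omega) (by omega)
  have hfil : (Icc 1 N).filter (fun b => r * s * b ≤ N) = Icc 1 (N / (r * s)) := by
    ext b
    simp only [mem_filter, mem_Icc]
    constructor
    · rintro ⟨⟨h1, h2⟩, h3⟩
      exact ⟨h1, (Nat.le_div_iff_mul_le hpos).2 (by rw [mul_comm]; exact h3)⟩
    · rintro ⟨h1, h2⟩
      have h3 : b * (r * s) ≤ N := (Nat.le_div_iff_mul_le hpos).1 h2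
      exact ⟨⟨h1, le_trans h2 (Nat.div_le_self _ _)⟩, by rw [mul_comm] at h3; exact h3⟩
  rw [← Finset.card_filter, hfil, Nat.card_Icc]
  simp

lemma count_G (N : ℕ) :
    ((Icc 1 N ×ˢ Icc 1 N ×ˢ Icc 1 N).filter
      (fun t : ℕ × ℕ × ℕ => t.1 * t.1 * t.2.1 * t.2.2 ≤ N)).card = Gcn N := by
  rw [Finset.card_filter, Finset.sum_product, Gcn]
  apply Finset.sum_congr rfl
  intro r hr
  rw [Finset.sum_product]
  apply Finset.sum_congr rfl
  intro s hs
  simp only [mem_Icc] at hr hs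
  have hpos : 0 < r * r * s := Nat.mul_pos (Nat.mul_pos (by omega) (by omega)) (by omega)
  have hfil : (Icc 1 N).filter (fun b => r * r * s * b ≤ N) = Icc 1 (N / (r * r * s)) := by
    ext b
    simp only [mem_filter, mem_Icc]
    constructor
    · rintro ⟨⟨h1, h2⟩, h3⟩
      exact ⟨h1, (Nat.le_div_iff_mul_le hpos).2 (by rw [mul_comm]; exact h3)⟩
    · rintro ⟨h1, h2⟩
      have h3 : b * (r * r * s) ≤ N := (Nat.le_div_iff_mul_le hpos).1 h2
      exact ⟨⟨h1, le_trans h2 (Nat.div_le_self _ _)⟩, by rw [mul_comm] at h3; exact h3⟩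
  rw [← Finset.card_filter, hfil, Nat.card_Icc]
  simp

lemma bij1 (N : ℕ) :
    ((Icc 1 N ×ˢ Icc 1 N ×ˢ Icc 1 N).filter
      (fun t : ℕ × ℕ × ℕ => t.1 * t.2.1 ≤ N ∧ t.2.2 ∣ t.1)).card =
    ((Icc 1 N ×ˢ Icc 1 N ×ˢ Icc 1 N).filter
      (fun t : ℕ × ℕ × ℕ => t.1 * t.2.1 * t.2.2 ≤ N)).card := by
  refine Finset.card_bij' (fun t _ => (t.2.2, t.1 / t.2.2, t.2.1))
    (fun u _ => (u.1 * u.2.1, u.2.2, u.1)) ?_ ?_ ?_ ?_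
  · rintro ⟨a, b, r⟩ ht
    simp only [Finset.mem_filter, Finset.mem_product, Finset.mem_Icc] at ht ⊢
    obtain ⟨⟨⟨ha1, ha2⟩, ⟨hb1, hb2⟩, hr1, hr2⟩, hab, hdvd⟩ := ht
    have hra : r ≤ a := Nat.le_of_dvd (by omega) hdvd
    refine ⟨⟨⟨hr1, hr2⟩, ⟨(Nat.one_le_div_iff (by omega)).2 hra,
      le_trans (Nat.div_le_self _ _) ha2⟩, hb1, hb2⟩, ?_⟩
    rw [Nat.mul_div_cancel' hdvd]
    exact hab
  · rintro ⟨r, s, b⟩ hu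
    simp only [Finset.mem_filter, Finset.mem_product, Finset.mem_Icc] at hu ⊢
    obtain ⟨⟨⟨hr1, hr2⟩, ⟨hs1, hs2⟩, hb1, hb2⟩, hp⟩ := hu
    have h1 : 1 ≤ r * s := Nat.one_le_iff_ne_zero.2 (by positivity)
    have h2 : r * s ≤ N := le_trans (Nat.le_mul_of_pos_right _ (by omega)) hp
    exact ⟨⟨⟨h1, h2⟩, ⟨hb1, hb2⟩, hr1, hr2⟩, hp, dvd_mul_right r s⟩
  · rintro ⟨a, b, r⟩ ht
    simp only [Finset.mem_filter, Finset.mem_product, Finset.mem_Icc] at ht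
    obtain ⟨-, -, hdvd⟩ := ht
    show (r * (a / r), b, r) = (a, b, r)
    rw [Nat.mul_div_cancel' hdvd]
  · rintro ⟨r, s, b⟩ hu
    simp only [Finset.mem_filter, Finset.mem_product, Finset.mem_Icc] at hu
    obtain ⟨⟨⟨hr1, -⟩, -⟩, -⟩ := hu
    show (r, r * s / r, b) = (r, s, b)
    rw [Nat.mul_div_cancel_left s (by omega)]

lemma bij2 (N : ℕ) :
    ((Icc 1 N ×ˢ Icc 1 N ×ˢ Icc 1 N).filter
      (fun t : ℕ × ℕ × ℕ => t.1 * t.2.1 ≤ N ∧ t.2.2 ∣ t.2.1)).card =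
    ((Icc 1 N ×ˢ Icc 1 N ×ˢ Icc 1 N).filter
      (fun t : ℕ × ℕ × ℕ => t.1 * t.2.1 * t.2.2 ≤ N)).card := by
  refine Finset.card_bij' (fun t _ => (t.2.2, t.2.1 / t.2.2, t.1))
    (fun u _ => (u.2.2, u.1 * u.2.1, u.1)) ?_ ?_ ?_ ?_
  · rintro ⟨a, b, r⟩ ht
    simp only [Finset.mem_filter, Finset.mem_product, Finset.mem_Icc] at ht ⊢
    obtain ⟨⟨⟨ha1, ha2⟩, ⟨hb1, hb2⟩, hr1, hr2⟩, hab, hdvd⟩ := ht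
    have hrb : r ≤ b := Nat.le_of_dvd (by omega) hdvd
    refine ⟨⟨⟨hr1, hr2⟩, ⟨(Nat.one_le_div_iff (by omega)).2 hrb,
      le_trans (Nat.div_le_self _ _) hb2⟩, ha1, ha2⟩, ?_⟩
    rw [Nat.mul_div_cancel' hdvd, mul_comm]
    exact hab
  · rintro ⟨r, s, b⟩ hu
    simp only [Finset.mem_filter, Finset.mem_product, Finset.mem_Icc] at hu ⊢
    obtain ⟨⟨⟨hr1, hr2⟩, ⟨hs1, hs2⟩, hb1, hb2⟩, hp⟩ := hu
    have h1 : 1 ≤ r * s := Nat.one_le_iff_ne_zero.2 (by positivity)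
    have h2 : r * s ≤ N := le_trans (Nat.le_mul_of_pos_right _ (by omega)) hp
    refine ⟨⟨⟨hb1, hb2⟩, ⟨h1, h2⟩, hr1, hr2⟩, ?_, dvd_mul_right r s⟩
    rw [mul_comm]
    exact hp
  · rintro ⟨a, b, r⟩ ht
    simp only [Finset.mem_filter, Finset.mem_product, Finset.mem_Icc] at ht
    obtain ⟨-, -, hdvd⟩ := ht
    show (a, r * (b / r), r) = (a, b, r)
    rw [Nat.mul_div_cancel' hdvd]
  · rintro ⟨r, s, b⟩ hu
    simp only [Finset.mem_filter, Finset.mem_product, Finset.mem_Icc] at hu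
    obtain ⟨⟨⟨hr1, -⟩, -⟩, -⟩ := hu
    show (r, r * s / r, b) = (r, s, b)
    rw [Nat.mul_div_cancel_left s (by omega)]

lemma bij3 (N : ℕ) :
    ((Icc 1 N ×ˢ Icc 1 N ×ˢ Icc 1 N).filter
      (fun t : ℕ × ℕ × ℕ => (t.1 * t.2.1 ≤ N ∧ t.2.2 ∣ t.1) ∧ (t.1 * t.2.1 ≤ N ∧ t.2.2 ∣ t.2.1))).card =
    ((Icc 1 N ×ˢ Icc 1 N ×ˢ Icc 1 N).filter
      (fun t : ℕ × ℕ × ℕ => t.1 * t.1 * t.2.1 * t.2.2 ≤ N)).card := by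
  refine Finset.card_bij' (fun t _ => (t.2.2, t.1 / t.2.2, t.2.1 / t.2.2))
    (fun u _ => (u.1 * u.2.1, u.1 * u.2.2, u.1)) ?_ ?_ ?_ ?_
  · rintro ⟨a, b, r⟩ ht
    simp only [Finset.mem_filter, Finset.mem_product, Finset.mem_Icc] at ht ⊢
    obtain ⟨⟨⟨ha1, ha2⟩, ⟨hb1, hb2⟩, hr1, hr2⟩, ⟨hab, hdvda⟩, -, hdvdb⟩ := ht
    have hra : r ≤ a := Nat.le_of_dvd (by omega) hdvda
    have hrb : r ≤ b := Nat.le_of_dvd (by omega) hdvdb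
    refine ⟨⟨⟨hr1, hr2⟩, ⟨(Nat.one_le_div_iff (by omega)).2 hra,
      le_trans (Nat.div_le_self _ _) ha2⟩, (Nat.one_le_div_iff (by omega)).2 hrb,
      le_trans (Nat.div_le_self _ _) hb2⟩, ?_⟩
    have e : r * r * (a / r) * (b / r) = (r * (a / r)) * (r * (b / r)) := by ring
    rw [e, Nat.mul_div_cancel' hdvda, Nat.mul_div_cancel' hdvdb]
    exact hab
  · rintro ⟨r, s, t⟩ hu
    simp only [Finset.mem_filter, Finset.mem_product, Finset.mem_Icc] at hu ⊢
    obtain ⟨⟨⟨hr1, hr2⟩, ⟨hs1, hs2⟩, ht1, ht2⟩, hp⟩ := hu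
    have e : r * r * s * t = (r * s) * (r * t) := by ring
    rw [e] at hp
    have h1 : 1 ≤ r * s := Nat.one_le_iff_ne_zero.2 (by positivity)
    have h1' : 1 ≤ r * t := Nat.one_le_iff_ne_zero.2 (by positivity)
    have h2 : r * s ≤ N := le_trans (Nat.le_mul_of_pos_right _ (by omega)) hp
    have h2' : r * t ≤ N := le_trans (Nat.le_mul_of_pos_left _ (by omega)) hp
    exact ⟨⟨⟨h1, h2⟩, ⟨h1', h2'⟩, hr1, hr2⟩, ⟨hp, dvd_mul_right r s⟩, hp, dvd_mul_right r t⟩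
  · rintro ⟨a, b, r⟩ ht
    simp only [Finset.mem_filter, Finset.mem_product, Finset.mem_Icc] at ht
    obtain ⟨-, ⟨-, hdvda⟩, -, hdvdb⟩ := ht
    show (r * (a / r), r * (b / r), r) = (a, b, r)
    rw [Nat.mul_div_cancel' hdvda, Nat.mul_div_cancel' hdvdb]
  · rintro ⟨r, s, t⟩ hu
    simp only [Finset.mem_filter, Finset.mem_product, Finset.mem_Icc] at hu
    obtain ⟨⟨⟨hr1, -⟩, -⟩, -⟩ := hu
    show (r, r * s / r, r * t / r) = (r, s, t)
    rw [Nat.mul_div_cancel_left s (by omega), Nat.mul_div_cancel_left t (by omega)]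

lemma key_identity (N : ℕ) : tripleCountA N + Gcn N = 2 * T3n N := by
  classical
  have hA : tripleCountA N =
      ((Icc 1 N ×ˢ Icc 1 N ×ˢ Icc 1 N).filter
        (fun t : ℕ × ℕ × ℕ => (t.1 * t.2.1 ≤ N ∧ t.2.2 ∣ t.1) ∨ (t.1 * t.2.1 ≤ N ∧ t.2.2 ∣ t.2.1))).card := by
    rw [tripleCountA]
    congr 1
    apply Finset.filter_congr
    intro t _
    constructor
    · rintro ⟨hab, -, h | h⟩
      · exact Or.inl ⟨hab, h⟩
      · exact Or.inr ⟨hab, h⟩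
    · rintro (⟨hab, h⟩ | ⟨hab, h⟩)
      · exact ⟨hab, h.mul_right _, Or.inl h⟩
      · exact ⟨hab, h.mul_left _, Or.inr h⟩
  have hunion := Finset.card_union_add_card_inter
    ((Icc 1 N ×ˢ Icc 1 N ×ˢ Icc 1 N).filter
      (fun t : ℕ × ℕ × ℕ => t.1 * t.2.1 ≤ N ∧ t.2.2 ∣ t.1))
    ((Icc 1 N ×ˢ Icc 1 N ×ˢ Icc 1 N).filter
      (fun t : ℕ × ℕ × ℕ => t.1 * t.2.1 ≤ N ∧ t.2.2 ∣ t.2.1))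
  rw [← Finset.filter_or, ← Finset.filter_and] at hunion
  rw [hA]
  rw [bij1 N, bij2 N, count_T3 N] at hunion
  have h3 : ((Icc 1 N ×ˢ Icc 1 N ×ˢ Icc 1 N).filter
      (fun t : ℕ × ℕ × ℕ => (t.1 * t.2.1 ≤ N ∧ t.2.2 ∣ t.1) ∧ (t.1 * t.2.1 ≤ N ∧ t.2.2 ∣ t.2.1))).card = Gcn N := by
    rw [bij3 N, count_G N]
  rw [h3] at hunion
  omega

theorem tripleCountA_asymptotic :
    ∃ C : ℝ, C > 0 ∧ ∀ᶠ N : ℕ in Filter.atTop,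
      |(tripleCountA N : ℝ) - N * (Real.log N) ^ 2| ≤ C * N * Real.log N := by
  refine ⟨24, by norm_num, ?_⟩
  rw [Filter.eventually_atTop]
  refine ⟨3, fun N hN => ?_⟩
  have hN1 : 1 ≤ N := by omega
  have hN' : (3:ℝ) ≤ N := by exact_mod_cast hN
  set L := Real.log N with hL
  have hL1 : 1 ≤ L := by
    rw [hL, Real.le_log_iff_exp_le (by linarith)]
    have := Real.exp_one_lt_d9
    linarith
  have hkey := key_identity N
  have hcast : (tripleCountA N : ℝ) = 2 * (T3n N : ℝ) - (Gcn N : ℝ) := by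
    have h : (tripleCountA N : ℝ) + (Gcn N : ℝ) = 2 * (T3n N : ℝ) := by exact_mod_cast hkey
    linarith
  have hT3 := T3_bounds N hN1
  have hG := Gc_bound N hN1
  have hGnn : (0:ℝ) ≤ (Gcn N : ℝ) := by positivity
  rw [hcast]
  have e : 2 * (T3n N : ℝ) - (Gcn N : ℝ) - (N:ℝ) * L ^ 2
      = 2 * ((T3n N : ℝ) - (N:ℝ) * L^2/2) - (Gcn N : ℝ) := by ring
  rw [e]
  have h1 : |2 * ((T3n N : ℝ) - (N:ℝ) * L^2/2) - (Gcn N : ℝ)|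
      ≤ 2 * |(T3n N : ℝ) - (N:ℝ) * L^2/2| + (Gcn N : ℝ) := by
    have h2 := abs_add_le (2 * ((T3n N : ℝ) - (N:ℝ) * L^2/2)) (-(Gcn N : ℝ))
    rw [abs_neg] at h2
    have e2 : 2 * ((T3n N : ℝ) - (N:ℝ) * L^2/2) + -(Gcn N : ℝ)
        = 2 * ((T3n N : ℝ) - (N:ℝ) * L^2/2) - (Gcn N : ℝ) := by ring
    rw [e2] at h2
    rw [abs_mul, abs_two] at h2
    rw [abs_of_nonneg hGnn] at h2
    exact h2
  have habs : |(T3n N : ℝ) - (N:ℝ) * L^2/2| ≤ (N:ℝ) * (7*L + 3) := by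
    have e3 : (N:ℝ) * L^2/2 = (N:ℝ) * L^2/2 := rfl
    exact hT3
  have hNnn : (0:ℝ) ≤ N := by linarith
  have hfin : 2 * ((N:ℝ) * (7*L+3)) + 2*(N:ℝ)*(L+1) ≤ 24 * (N:ℝ) * L := by
    nlinarith [mul_le_mul_of_nonneg_left hL1 hNnn]
  calc |2 * ((T3n N : ℝ) - (N:ℝ) * L^2/2) - (Gcn N : ℝ)|
      ≤ 2 * |(T3n N : ℝ) - (N:ℝ) * L^2/2| + (Gcn N : ℝ) := h1
    _ ≤ 2 * ((N:ℝ) * (7*L+3)) + 2*(N:ℝ)*(L+1) := by linarith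
    _ ≤ 24 * (N:ℝ) * L := hfin
end

section
/- Σ_{ab ≤ N} d(gcd(a,b)) = O(N log N), where the sum is over all pairs of positive integers (a,b) with ab ≤ N, gcd(a,b) is the greatest common divisor of a and b, and d(n) denotes the number of positive divisors of n. -/
lemma harmonic_le (N : ℕ) : ∑ a ∈ Finset.Icc 1 N, (1/(a:ℝ)) ≤ 1 + Real.log N := by
  induction N with
  | zero => simp
  | succ n ih =>
    rcases Nat.eq_zero_or_pos n with h | h
    · subst h; simp
    rw [Finset.sum_Icc_succ_top (by omega)]
    have hn : (0:ℝ) < n := by exact_mod_cast h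
    have hlog : Real.log n + 1/(n+1 : ℝ) ≤ Real.log ((n:ℕ)+1 : ℕ) := by
      push_cast
      have h0 := Real.log_le_sub_one_of_pos (x := (n:ℝ)/(n+1)) (by positivity)
      rw [Real.log_div (ne_of_gt hn) (by positivity)] at h0
      have h1 : (n:ℝ)/(n+1) - 1 = -(1/(n+1)) := by field_simp; ring
      linarith
    push_cast at hlog ⊢
    linarith

lemma invsq_le (N : ℕ) : ∑ e ∈ Finset.Icc 1 N, (1/((e:ℝ)*e)) ≤ 2 := by
  have key : ∀ n : ℕ, 1 ≤ n → ∑ e ∈ Finset.Icc 1 n, (1/((e:ℝ)*e)) ≤ 2 - 1/n := by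
    intro n hn
    induction n with
    | zero => omega
    | succ m ih =>
      rcases Nat.eq_zero_or_pos m with h | h
      · subst h; norm_num
      rw [Finset.sum_Icc_succ_top (by omega)]
      have hm : (0:ℝ) < m := by exact_mod_cast h
      have := ih h
      push_cast at this ⊢
      have h1 : 1/(((m:ℝ)+1)*((m:ℝ)+1)) ≤ 1/(m:ℝ) - 1/((m:ℝ)+1) := by
        rw [div_sub_div _ _ (ne_of_gt hm) (by positivity)]
        rw [div_le_div_iff₀ (by positivity) (by positivity)]
        nlinarith
      linarith
  rcases Nat.eq_zero_or_pos N with h | h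
  · subst h; simp
  have h2 : (0:ℝ) < 1/N := by positivity
  linarith [key N h]

lemma count_pairs_le (N e : ℕ) (he : 1 ≤ e) :
    (((Finset.Icc 1 N ×ˢ Finset.Icc 1 N).filter (fun q => e*e*(q.1*q.2) ≤ N)).card : ℝ)
      ≤ ∑ a ∈ Finset.Icc 1 N, (N:ℝ)/((e:ℝ)*e*a) := by
  have h1 : ((Finset.Icc 1 N ×ˢ Finset.Icc 1 N).filter (fun q => e*e*(q.1*q.2) ≤ N)).card
      = ∑ a ∈ Finset.Icc 1 N, ((Finset.Icc 1 N).filter (fun b => e*e*(a*b) ≤ N)).card := by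
    rw [Finset.card_filter, Finset.sum_product]
    exact Finset.sum_congr rfl fun a _ => (Finset.card_filter _ _).symm
  rw [h1]
  push_cast
  apply Finset.sum_le_sum
  intro a ha
  simp only [Finset.mem_Icc] at ha
  have hpos : 0 < e*e*a := Nat.mul_pos (Nat.mul_pos he he) ha.1
  have hsub : (Finset.Icc 1 N).filter (fun b => e*e*(a*b) ≤ N) ⊆ Finset.Icc 1 (N/(e*e*a)) := by
    intro b hb
    simp only [Finset.mem_filter, Finset.mem_Icc] at hb ⊢
    refine ⟨hb.1.1, ?_⟩
    rw [Nat.le_div_iff_mul_le hpos]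
    calc b * (e*e*a) = e*e*(a*b) := by ring
      _ ≤ N := hb.2
  calc (((Finset.Icc 1 N).filter (fun b => e*e*(a*b) ≤ N)).card : ℝ)
      ≤ ((Finset.Icc 1 (N/(e*e*a))).card : ℝ) := by
        exact_mod_cast Finset.card_le_card hsub
    _ = ((N/(e*e*a) : ℕ) : ℝ) := by rw [Nat.card_Icc]; norm_num
    _ ≤ (N:ℝ)/((e*e*a : ℕ):ℝ) := Nat.cast_div_le
    _ = (N:ℝ)/((e:ℝ)*e*a) := by push_cast; ring

theorem sum_divisors_gcd_bigO :
    ∃ C : ℝ, C > 0 ∧ ∀ᶠ N : ℕ in Filter.atTop,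
      (∑ p ∈ (Finset.Icc 1 N ×ˢ Finset.Icc 1 N).filter (fun p => p.1 * p.2 ≤ N),
          ((Nat.gcd p.1 p.2).divisors.card : ℝ))
        ≤ C * N * Real.log N := by
  refine ⟨4, by norm_num, ?_⟩
  filter_upwards [Filter.eventually_ge_atTop 3] with N hN
  set T := (Finset.Icc 1 N ×ˢ Finset.Icc 1 N).filter (fun p => p.1 * p.2 ≤ N) with hT
  -- Step A: expand the divisor count
  have stepA : ∀ p ∈ T, ((Nat.gcd p.1 p.2).divisors.card : ℝ)
      = ∑ e ∈ Finset.Icc 1 N, (if e ∣ p.1 ∧ e ∣ p.2 then (1:ℝ) else 0) := by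
    intro p hp
    simp only [hT, Finset.mem_filter, Finset.mem_product, Finset.mem_Icc] at hp
    obtain ⟨⟨⟨h11, h12⟩, h21, h22⟩, hmul⟩ := hp
    have hg : (Nat.gcd p.1 p.2).divisors
        = (Finset.Icc 1 N).filter (fun e => e ∣ p.1 ∧ e ∣ p.2) := by
      ext e
      simp only [Nat.mem_divisors, Finset.mem_filter, Finset.mem_Icc, Nat.dvd_gcd_iff]
      constructor
      · rintro ⟨⟨h1, h2⟩, hne⟩
        have he1 : 1 ≤ e := Nat.one_le_iff_ne_zero.mpr (by
          rintro rfl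
          have := Nat.eq_zero_of_zero_dvd h1; omega)
        have heN : e ≤ N := le_trans (Nat.le_of_dvd (by omega) h1) h12
        exact ⟨⟨he1, heN⟩, h1, h2⟩
      · rintro ⟨⟨he1, heN⟩, h1, h2⟩
        refine ⟨⟨h1, h2⟩, ?_⟩
        have := Nat.gcd_pos_of_pos_left (n := p.2) (m := p.1) (by omega)
        omega
    rw [hg, Finset.sum_boole]
  rw [Finset.sum_congr rfl stepA, Finset.sum_comm]
  have stepA2 : ∀ e ∈ Finset.Icc 1 N,
      (∑ p ∈ T, (if e ∣ p.1 ∧ e ∣ p.2 then (1:ℝ) else 0))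
        = ((T.filter (fun p => e ∣ p.1 ∧ e ∣ p.2)).card : ℝ) :=
    fun e _ => by rw [Finset.sum_boole]
  rw [Finset.sum_congr rfl stepA2]
  -- Step B: injection into pairs with e*e*(a*b) ≤ N
  have stepB : ∀ e ∈ Finset.Icc 1 N,
      ((T.filter (fun p => e ∣ p.1 ∧ e ∣ p.2)).card : ℝ)
        ≤ ∑ a ∈ Finset.Icc 1 N, (N:ℝ)/((e:ℝ)*e*a) := by
    intro e he
    simp only [Finset.mem_Icc] at he
    have hcard : (T.filter (fun p => e ∣ p.1 ∧ e ∣ p.2)).card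
        ≤ ((Finset.Icc 1 N ×ˢ Finset.Icc 1 N).filter (fun q => e*e*(q.1*q.2) ≤ N)).card := by
      apply Finset.card_le_card_of_injOn (fun p => (p.1/e, p.2/e))
      · intro p hp
        simp only [hT, Finset.mem_coe, Finset.mem_filter, Finset.mem_product, Finset.mem_Icc] at hp ⊢
        obtain ⟨⟨⟨⟨h11, h12⟩, h21, h22⟩, hmul⟩, hd1, hd2⟩ := hp
        refine ⟨⟨⟨?_, le_trans (Nat.div_le_self _ _) h12⟩,
          ?_, le_trans (Nat.div_le_self _ _) h22⟩, ?_⟩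
        · exact (Nat.one_le_div_iff (by omega)).mpr (Nat.le_of_dvd (by omega) hd1)
        · exact (Nat.one_le_div_iff (by omega)).mpr (Nat.le_of_dvd (by omega) hd2)
        · calc e*e*(p.1/e * (p.2/e)) = (e*(p.1/e)) * (e*(p.2/e)) := by ring
            _ = p.1 * p.2 := by rw [Nat.mul_div_cancel' hd1, Nat.mul_div_cancel' hd2]
            _ ≤ N := hmul
      · intro p hp q hq hpq
        simp only [hT, Finset.mem_coe, Finset.mem_filter] at hp hq
        obtain ⟨_, hp1, hp2⟩ := hp
        obtain ⟨_, hq1, hq2⟩ := hq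
        have h1 : p.1/e = q.1/e := congrArg Prod.fst hpq
        have h2 : p.2/e = q.2/e := congrArg Prod.snd hpq
        have e1 : p.1 = q.1 := by
          rw [← Nat.mul_div_cancel' hp1, ← Nat.mul_div_cancel' hq1, h1]
        have e2 : p.2 = q.2 := by
          rw [← Nat.mul_div_cancel' hp2, ← Nat.mul_div_cancel' hq2, h2]
        exact Prod.ext e1 e2
    calc ((T.filter (fun p => e ∣ p.1 ∧ e ∣ p.2)).card : ℝ)
        ≤ (((Finset.Icc 1 N ×ˢ Finset.Icc 1 N).filter
            (fun q => e*e*(q.1*q.2) ≤ N)).card : ℝ) := by exact_mod_cast hcard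
      _ ≤ ∑ a ∈ Finset.Icc 1 N, (N:ℝ)/((e:ℝ)*e*a) := count_pairs_le N e he.1
  -- Step C: combine
  have hNpos : (0:ℝ) < N := by
    have : (3:ℕ) ≤ N := hN
    positivity
  have hlogN : 1 ≤ Real.log N := by
    rw [Real.le_log_iff_exp_le hNpos]
    calc Real.exp 1 ≤ 3 := by
          have := Real.exp_one_lt_d9; linarith
      _ ≤ (N:ℝ) := by exact_mod_cast hN
  have hH := harmonic_le N
  have hE := invsq_le N
  have hHnn : (0:ℝ) ≤ ∑ a ∈ Finset.Icc 1 N, (1/(a:ℝ)) :=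
    Finset.sum_nonneg fun a _ => by positivity
  have hEnn : (0:ℝ) ≤ ∑ e ∈ Finset.Icc 1 N, (1/((e:ℝ)*e)) :=
    Finset.sum_nonneg fun e _ => by positivity
  calc (∑ e ∈ Finset.Icc 1 N, ((T.filter (fun p => e ∣ p.1 ∧ e ∣ p.2)).card : ℝ))
      ≤ ∑ e ∈ Finset.Icc 1 N, ∑ a ∈ Finset.Icc 1 N, (N:ℝ)/((e:ℝ)*e*a) :=
        Finset.sum_le_sum stepB
    _ = (N:ℝ) * (∑ e ∈ Finset.Icc 1 N, (1/((e:ℝ)*e)))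
          * (∑ a ∈ Finset.Icc 1 N, (1/(a:ℝ))) := by
        simp only [Finset.mul_sum, Finset.sum_mul]
        refine Eq.trans Finset.sum_comm ?_
        refine Finset.sum_congr rfl fun a _ => Finset.sum_congr rfl fun e _ => ?_
        simp only [div_eq_mul_inv, mul_inv, one_div]
        ring
    _ ≤ (N:ℝ) * 2 * (1 + Real.log N) := by
        have h1 : (N:ℝ) * (∑ e ∈ Finset.Icc 1 N, (1/((e:ℝ)*e))) ≤ (N:ℝ) * 2 := by
          exact mul_le_mul_of_nonneg_left hE (le_of_lt hNpos)
        have h2 : (0:ℝ) ≤ 1 + Real.log N := by linarith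
        calc (N:ℝ) * (∑ e ∈ Finset.Icc 1 N, (1/((e:ℝ)*e)))
              * (∑ a ∈ Finset.Icc 1 N, (1/(a:ℝ)))
            ≤ (N:ℝ) * (∑ e ∈ Finset.Icc 1 N, (1/((e:ℝ)*e))) * (1 + Real.log N) := by
              apply mul_le_mul_of_nonneg_left hH
              positivity
          _ ≤ (N:ℝ) * 2 * (1 + Real.log N) := mul_le_mul_of_nonneg_right h1 h2
    _ ≤ 4 * N * Real.log N := by nlinarith
end
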